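/- Let n ≥ 4 be an integer, set t = tan(π/n), and let λ be a real number with λ ≥ (√3 + t)/(√3 − t). In the Euclidean plane ℝ² = EuclideanSpace ℝ (Fin 2), define the points A = (−1/2, 1/(2t)), B = (1/2, 1/(2t)), P = (−λ/2, λ/(2t)), Q = (λ/2, λ/(2t)), S₁ = (0, 1/(2t) + 1/(2√3)) and S₂ = (0, λ/(2t) − λ/(2√3)). Then: (i) 1/(2t) ≤ 1/(2t) + 1/(2√3) ≤ λ/(2t) − λ/(2√3) ≤ λ/(2t), so that the points M = (0, 1/(2t)), S₁, S₂, N = (0, λ/(2t)) occur in this order on the segment MN; (ii) the (unoriented) angles satisfy ∠ A S₁ B = 2π/3 and ∠ P S₂ Q = 2π/3; and (iii) dist A S₁ + dist B S₁ + dist S₁ S₂ + dist P S₂ + dist Q S₂ = (λ − 1)/(2·tan(π/n)) + √3·(λ + 1)/2. -/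

import Mathlib

open Real EuclideanGeometry

noncomputable section

abbrev Pt : Type := EuclideanSpace ℝ (Fin 2)

/-- Vertex `A` of the trapezoid. -/
noncomputable def trapA (t : ℝ) : Pt := !₂[-(1 / 2), 1 / (2 * t)]

/-- Vertex `B` of the trapezoid. -/
noncomputable def trapB (t : ℝ) : Pt := !₂[1 / 2, 1 / (2 * t)]

/-- Vertex `P` of the trapezoid. -/
noncomputable def trapP (t lam : ℝ) : Pt := !₂[-(lam / 2), lam / (2 * t)]

/-- Vertex `Q` of the trapezoid. -/
noncomputable def trapQ (t lam : ℝ) : Pt := !₂[lam / 2, lam / (2 * t)]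

/-- The Steiner point `S₁` of the vertical fork. -/
noncomputable def trapS₁ (t : ℝ) : Pt := !₂[0, 1 / (2 * t) + 1 / (2 * Real.sqrt 3)]

/-- The Steiner point `S₂` of the vertical fork. -/
noncomputable def trapS₂ (t lam : ℝ) : Pt := !₂[0, lam / (2 * t) - lam / (2 * Real.sqrt 3)]

open RealInnerProductSpace

noncomputable def pmk (a b : ℝ) : Pt := !₂[a, b]

lemma pmk_dist (a b c d : ℝ) : dist (pmk a b) (pmk c d) = Real.sqrt ((a-c)^2 + (b-d)^2) := by
  rw [EuclideanSpace.dist_eq]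
  simp [pmk, Fin.sum_univ_two, Real.dist_eq, sq_abs]

lemma pmk_inner (a b c d : ℝ) : ⟪pmk a b, pmk c d⟫ = a*c + b*d := by
  simp [pmk, PiLp.inner_apply, Fin.sum_univ_two]; ring

lemma pmk_norm (a b : ℝ) : ‖pmk a b‖ = Real.sqrt (a^2 + b^2) := by
  rw [EuclideanSpace.norm_eq]; simp [pmk, Fin.sum_univ_two, sq]

lemma arccos_neg_half : Real.arccos (-(1/2)) = 2 * π / 3 := by
  have h : Real.cos (2 * π / 3) = -(1/2) := by
    rw [show (2 * π / 3 : ℝ) = π - π/3 by ring, Real.cos_pi_sub, Real.cos_pi_div_three]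
  rw [← h, Real.arccos_cos (by positivity) (by linarith [Real.pi_pos])]

lemma angle_aux (a c : ℝ) (hc : c ≠ 0) (hac : a^2 = 3*c^2) :
    InnerProductGeometry.angle (pmk (-a) c) (pmk a c) = 2 * π / 3 := by
  unfold InnerProductGeometry.angle
  rw [pmk_inner, pmk_norm, pmk_norm]
  have habs : (0:ℝ) < 2 * |c| := by positivity
  have h1 : (-a)^2 + c^2 = (2*|c|)^2 := by nlinarith [sq_abs c]
  have h2 : a^2 + c^2 = (2*|c|)^2 := by nlinarith [sq_abs c]
  rw [h1, h2, Real.sqrt_sq habs.le]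
  rw [show (-a*a + c*c) / (2*|c| * (2*|c|)) = -(1/2) by
    field_simp
    nlinarith [sq_abs c]]
  exact arccos_neg_half

set_option maxHeartbeats 2000000 in
/-- Existence and length of the vertical fork of the isosceles trapezoid with parallel
sides `1` and `λ` and apex angle `2π/n`:  (i) the Steiner points `S₁`, `S₂` lie on
the segment `MN` in the order `M, S₁, S₂, N`; (ii) the angles `∠ A S₁ B` and
`∠ P S₂ Q` are `2π/3`; (iii) the total length of the fork is
`(λ − 1)/(2 tan(π/n)) + √3 (λ + 1)/2`. -/
theorem vertical_fork (n : ℕ) (hn : 4 ≤ n) (t lam : ℝ) (ht : t = Real.tan (π / n))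
    (hlam : (Real.sqrt 3 + t) / (Real.sqrt 3 - t) ≤ lam) :
    (1 / (2 * t) ≤ 1 / (2 * t) + 1 / (2 * Real.sqrt 3) ∧
      1 / (2 * t) + 1 / (2 * Real.sqrt 3) ≤ lam / (2 * t) - lam / (2 * Real.sqrt 3) ∧
      lam / (2 * t) - lam / (2 * Real.sqrt 3) ≤ lam / (2 * t)) ∧
    (EuclideanGeometry.angle (trapA t) (trapS₁ t) (trapB t) = 2 * π / 3 ∧
      EuclideanGeometry.angle (trapP t lam) (trapS₂ t lam) (trapQ t lam) = 2 * π / 3) ∧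
    dist (trapA t) (trapS₁ t) + dist (trapB t) (trapS₁ t) +
        dist (trapS₁ t) (trapS₂ t lam) + dist (trapP t lam) (trapS₂ t lam) +
        dist (trapQ t lam) (trapS₂ t lam) =
      (lam - 1) / (2 * Real.tan (π / n)) + Real.sqrt 3 * (lam + 1) / 2 := by
  have hs : (0:ℝ) < Real.sqrt 3 := by positivity
  have h3 : (Real.sqrt 3)^2 = 3 := Real.sq_sqrt (by norm_num)
  -- facts about t
  have hn0 : (0:ℝ) < n := by positivity
  have h1 : 0 < π / n := by positivity
  have h2 : π / n ≤ π / 4 := by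
    apply div_le_div_of_nonneg_left Real.pi_pos.le (by norm_num)
    exact_mod_cast hn
  have ht0 : 0 < t := by
    rw [ht]
    exact Real.tan_pos_of_pos_of_lt_pi_div_two h1 (by nlinarith [Real.pi_pos])
  have ht1 : t ≤ 1 := by
    rw [ht]
    rcases eq_or_lt_of_le h2 with h | h
    · rw [h, Real.tan_pi_div_four]
    · rw [← Real.tan_pi_div_four]
      exact (Real.tan_lt_tan_of_nonneg_of_lt_pi_div_two h1.le (by linarith [Real.pi_pos]) h).le
  have hts : t < Real.sqrt 3 := by nlinarith
  have hst : (0:ℝ) < Real.sqrt 3 - t := by linarith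
  have key : Real.sqrt 3 + t ≤ lam * (Real.sqrt 3 - t) := by
    have := (div_le_iff₀ hst).mp hlam
    linarith
  have hlam1 : 1 ≤ lam := by nlinarith
  -- part (i)
  have hmid : 1 / (2 * t) + 1 / (2 * Real.sqrt 3) ≤ lam / (2 * t) - lam / (2 * Real.sqrt 3) := by
    have expand : lam / (2 * t) - lam / (2 * Real.sqrt 3) - (1 / (2 * t) + 1 / (2 * Real.sqrt 3))
        = (lam * (Real.sqrt 3 - t) - (Real.sqrt 3 + t)) / (2 * t * Real.sqrt 3) := by
      field_simp
    have hnum : 0 ≤ (lam * (Real.sqrt 3 - t) - (Real.sqrt 3 + t)) / (2 * t * Real.sqrt 3) :=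
      div_nonneg (by linarith) (by positivity)
    linarith
  have hpos1 : (0:ℝ) < 1 / (2 * Real.sqrt 3) := by positivity
  refine ⟨⟨by linarith, hmid, by
      have : 0 ≤ lam / (2 * Real.sqrt 3) := by positivity
      linarith⟩, ⟨?_, ?_⟩, ?_⟩
  -- angle at S₁
  · have hu : trapA t - trapS₁ t = pmk (-(1/2)) (-(1/(2*Real.sqrt 3))) := by
      ext i; fin_cases i <;> simp [trapA, trapS₁, pmk]
    have hv : trapB t - trapS₁ t = pmk (1/2) (-(1/(2*Real.sqrt 3))) := by
      ext i; fin_cases i <;> simp [trapB, trapS₁, pmk]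
    have hc2 : (1/(2*Real.sqrt 3))^2 = (1:ℝ)/12 := by
      rw [div_pow, mul_pow, h3]; norm_num
    unfold EuclideanGeometry.angle
    rw [vsub_eq_sub, vsub_eq_sub, hu, hv]
    exact angle_aux _ _ (neg_ne_zero.mpr (by positivity))
      (by rw [neg_sq, hc2]; norm_num)
  -- angle at S₂
  · have hu : trapP t lam - trapS₂ t lam = pmk (-(lam/2)) (lam/(2*Real.sqrt 3)) := by
      ext i; fin_cases i <;> simp [trapP, trapS₂, pmk] <;> ring
    have hv : trapQ t lam - trapS₂ t lam = pmk (lam/2) (lam/(2*Real.sqrt 3)) := by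
      ext i; fin_cases i <;> simp [trapQ, trapS₂, pmk] <;> ring
    have hc2 : (lam/(2*Real.sqrt 3))^2 = lam^2/12 := by
      rw [div_pow, mul_pow, h3]; ring
    unfold EuclideanGeometry.angle
    rw [vsub_eq_sub, vsub_eq_sub, hu, hv]
    have hl0 : lam / (2*Real.sqrt 3) ≠ 0 := by positivity
    exact angle_aux _ _ hl0 (by rw [hc2]; ring)
  -- lengths
  · have d1 : dist (trapA t) (trapS₁ t) = Real.sqrt 3 / 3 := by
      rw [show trapA t = pmk (-(1/2)) (1/(2*t)) from rfl,
        show trapS₁ t = pmk 0 (1/(2*t) + 1/(2*Real.sqrt 3)) from rfl, pmk_dist,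
        show (-(1/2) - 0:ℝ)^2 + (1/(2*t) - (1/(2*t) + 1/(2*Real.sqrt 3)))^2
          = (Real.sqrt 3/3)^2 by
            rw [show 1/(2*t) - (1/(2*t) + 1/(2*Real.sqrt 3)) = -(1/(2*Real.sqrt 3)) by ring,
              neg_sq, show (1/(2*Real.sqrt 3))^2 = (1:ℝ)/12 by rw [div_pow, mul_pow, h3]; norm_num,
              div_pow, h3]
            norm_num]
      exact Real.sqrt_sq (by positivity)
    have d2 : dist (trapB t) (trapS₁ t) = Real.sqrt 3 / 3 := by
      rw [show trapB t = pmk (1/2) (1/(2*t)) from rfl,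
        show trapS₁ t = pmk 0 (1/(2*t) + 1/(2*Real.sqrt 3)) from rfl, pmk_dist,
        show ((1:ℝ)/2 - 0)^2 + (1/(2*t) - (1/(2*t) + 1/(2*Real.sqrt 3)))^2
          = (Real.sqrt 3/3)^2 by
            rw [show 1/(2*t) - (1/(2*t) + 1/(2*Real.sqrt 3)) = -(1/(2*Real.sqrt 3)) by ring,
              neg_sq, show (1/(2*Real.sqrt 3))^2 = (1:ℝ)/12 by rw [div_pow, mul_pow, h3]; norm_num,
              div_pow, h3]
            norm_num]
      exact Real.sqrt_sq (by positivity)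
    have d3 : dist (trapS₁ t) (trapS₂ t lam)
        = lam / (2*t) - lam / (2*Real.sqrt 3) - (1/(2*t) + 1/(2*Real.sqrt 3)) := by
      rw [show trapS₁ t = pmk 0 (1/(2*t) + 1/(2*Real.sqrt 3)) from rfl,
        show trapS₂ t lam = pmk 0 (lam/(2*t) - lam/(2*Real.sqrt 3)) from rfl, pmk_dist]
      rw [show ((0:ℝ) - 0)^2 + (1/(2*t) + 1/(2*Real.sqrt 3) - (lam/(2*t) - lam/(2*Real.sqrt 3)))^2
          = (lam/(2*t) - lam/(2*Real.sqrt 3) - (1/(2*t) + 1/(2*Real.sqrt 3)))^2 by ring]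
      exact Real.sqrt_sq (by linarith)
    have d4 : dist (trapP t lam) (trapS₂ t lam) = lam * Real.sqrt 3 / 3 := by
      rw [show trapP t lam = pmk (-(lam/2)) (lam/(2*t)) from rfl,
        show trapS₂ t lam = pmk 0 (lam/(2*t) - lam/(2*Real.sqrt 3)) from rfl, pmk_dist,
        show (-(lam/2) - 0)^2 + (lam/(2*t) - (lam/(2*t) - lam/(2*Real.sqrt 3)))^2
          = (lam * Real.sqrt 3/3)^2 by
            rw [show lam/(2*t) - (lam/(2*t) - lam/(2*Real.sqrt 3)) = lam/(2*Real.sqrt 3) by ring,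
              show (lam/(2*Real.sqrt 3))^2 = lam^2/12 by rw [div_pow, mul_pow, h3]; ring,
              div_pow, mul_pow, h3]
            ring]
      exact Real.sqrt_sq (by positivity)
    have d5 : dist (trapQ t lam) (trapS₂ t lam) = lam * Real.sqrt 3 / 3 := by
      rw [show trapQ t lam = pmk (lam/2) (lam/(2*t)) from rfl,
        show trapS₂ t lam = pmk 0 (lam/(2*t) - lam/(2*Real.sqrt 3)) from rfl, pmk_dist,
        show (lam/2 - 0)^2 + (lam/(2*t) - (lam/(2*t) - lam/(2*Real.sqrt 3)))^2
          = (lam * Real.sqrt 3/3)^2 by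
            rw [show lam/(2*t) - (lam/(2*t) - lam/(2*Real.sqrt 3)) = lam/(2*Real.sqrt 3) by ring,
              show (lam/(2*Real.sqrt 3))^2 = lam^2/12 by rw [div_pow, mul_pow, h3]; ring,
              div_pow, mul_pow, h3]
            ring]
      exact Real.sqrt_sq (by positivity)
    have hsinv : 1 / (2*Real.sqrt 3) = Real.sqrt 3 / 6 := by
      rw [div_eq_div_iff (by positivity) (by norm_num)]
      nlinarith [h3]
    have hs2 : lam / (2*Real.sqrt 3) = lam * Real.sqrt 3 / 6 := by
      rw [div_eq_div_iff (by positivity) (by norm_num)]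
      nlinarith [h3]
    rw [d1, d2, d3, d4, d5, ← ht, hsinv, hs2]
    field_simp
    ring

end
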